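/- Let G be a group acting on a set M, let x ∈ M, and let K : G → M → ℝ be a one-cocycle modulo constants, i.e. for all g, h ∈ G there exists c ∈ ℝ with K (g*h) y = K g (h • y) + K h y + c for all y ∈ M. Define 𝔊_x(g,h) := K g (h • x) − K g x. Then 𝔊_x satisfies the inhomogeneous two-cocycle identity: for all f, g, h ∈ G, 𝔊_x(g,h) − 𝔊_x(f*g, h) + 𝔊_x(f, g*h) − 𝔊_x(f,g) = 0. -/
import Mathlib

/-- If `K : G → M → ℝ` is a one-cocycle modulo constants for an action of `G` on `M`,
then `𝔊_x(g,h) := K g (h • x) − K g x` satisfies the inhomogeneous two-cocycle identity. -/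
theorem ILM_of_oneCocycle_is_two_cocycle {G M : Type*} [Group G] [MulAction G M]
    (x : M) (K : G → M → ℝ)
    (hK : ∀ g h : G, ∃ c : ℝ, ∀ y : M, K (g * h) y = K g (h • y) + K h y + c)
    (f g h : G) :
    (K g (h • x) - K g x) - (K (f * g) (h • x) - K (f * g) x)
      + (K f ((g * h) • x) - K f x) - (K f (g • x) - K f x) = 0 := by
  obtain ⟨c, hc⟩ := hK f g
  have h1 := hc (h • x)
  have h2 := hc x
  rw [mul_smul]
  linarith
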